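/- The success probability of the Bayes-type classifier Γ^B admits the representation ℙ{Γ^B(X^(δ)) = Y} = Σ_{k=1}^M 𝔼[ max{ 𝔼(Y·ℙ{δ=k | X^(k), Y} | X^(k)), 𝔼((1−Y)·ℙ{δ=k | X^(k), Y} | X^(k)) } ], where ℙ{δ=k | X^(k), Y} := 𝔼[1{δ=k} | σ(X^(k), Y)]. -/

import Mathlib

open MeasureTheory ProbabilityTheory Filter

noncomputable section

/-- The sequence space `ℓ₂` of square-summable real sequences. -/
abbrev ell2 : Type := lp (fun _ : ℕ => ℝ) 2

noncomputable instance : MeasurableSpace ell2 := borel _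
instance : BorelSpace ell2 := ⟨rfl⟩

/-- Pull-out helper: integrating a bounded `m`-measurable factor against `f` is the same as
against `P[f|m]`. -/
lemma bayes_key_mul {Ω : Type} [m0 : MeasurableSpace Ω] (P : Measure Ω) [IsProbabilityMeasure P]
    {m : MeasurableSpace Ω} (hm : m ≤ m0) {g f : Ω → ℝ}
    (hg : StronglyMeasurable[m] g) (hgb : ∀ ω, ‖g ω‖ ≤ 1) (hf : Integrable f P) :
    ∫ ω, g ω * f ω ∂P = ∫ ω, g ω * (P[f|m]) ω ∂P := by
  have hfg : Integrable (g * f) P :=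
    hf.bdd_mul ((hg.mono hm).aestronglyMeasurable) (ae_of_all _ hgb)
  have h := condExp_mul_of_stronglyMeasurable_left hg hfg hf
  calc ∫ ω, g ω * f ω ∂P = ∫ ω, (g * f) ω ∂P := rfl
    _ = ∫ ω, (P[g * f|m]) ω ∂P := (integral_condExp hm).symm
    _ = ∫ ω, (g * P[f|m]) ω ∂P := integral_congr_ae h
    _ = _ := rfl

/-- The success probability of the Bayes-type classifier `Γ^B` admits the
representation
`ℙ{Γ^B(X^(δ)) = Y} = Σ_k 𝔼[ max{ 𝔼(Y·ℙ{δ=k|X^(k),Y} | X^(k)), 𝔼((1−Y)·ℙ{δ=k|X^(k),Y} | X^(k)) } ]`,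
where `ℙ{δ=k | X^(k), Y} = 𝔼[1{δ=k} | σ(X^(k), Y)]`. -/
theorem bayes_success_probability_representation
    {Ω : Type} [MeasurableSpace Ω] (P : Measure Ω) [IsProbabilityMeasure P]
    (M : ℕ) (hM : 1 ≤ M)
    (Y : Ω → ℝ) (hYmeas : Measurable Y) (hY01 : ∀ ω, Y ω = 0 ∨ Y ω = 1)
    (δ : Ω → Fin M) (hδ : Measurable δ)
    (X : Fin M → Ω → ell2) (hX : ∀ k, Measurable (X k))
    (φ : Fin M → Ω → ℝ)
    (hφ : ∀ k, φ k =
      P[(fun ω => (2 * Y ω - 1) * (if δ ω = k then (1:ℝ) else 0)) |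
        MeasurableSpace.comap (X k) inferInstance])
    -- `r k` is (a version of) the conditional probability `ℙ{δ=k | X^(k), Y}`
    (r : Fin M → Ω → ℝ)
    (hr : ∀ k, r k =
      P[(fun ω => (if δ ω = k then (1:ℝ) else 0)) |
        MeasurableSpace.comap (fun ω => (X k ω, Y ω)) inferInstance])
    -- `A k` and `B k` are the inner conditional expectations given `σ(X^(k))`
    (A B : Fin M → Ω → ℝ)
    (hA : ∀ k, A k = P[(fun ω => Y ω * r k ω) | MeasurableSpace.comap (X k) inferInstance])
    (hB : ∀ k, B k = P[(fun ω => (1 - Y ω) * r k ω) | MeasurableSpace.comap (X k) inferInstance]) :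
    (P {ω | (∑ k, (if δ ω = k then (1:ℝ) else 0) * (if 0 < φ k ω then (1:ℝ) else 0)) = Y ω}).toReal
      = ∑ k, ∫ ω, max (A k ω) (B k ω) ∂P := by
  classical
  set mX : Fin M → MeasurableSpace Ω :=
    fun k => MeasurableSpace.comap (X k) inferInstance with hmXdef
  set mXY : Fin M → MeasurableSpace Ω :=
    fun k => MeasurableSpace.comap (fun ω => (X k ω, Y ω)) inferInstance with hmXYdef
  have hmX : ∀ k, mX k ≤ ‹MeasurableSpace Ω› := fun k => (hX k).comap_le
  have hpair : ∀ k, Measurable (fun ω => (X k ω, Y ω)) := fun k => (hX k).prodMk hYmeas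
  have hmXY : ∀ k, mXY k ≤ ‹MeasurableSpace Ω› := fun k => (hpair k).comap_le
  have hle : ∀ k, mX k ≤ mXY k := by
    intro k
    have hco : MeasurableSpace.comap (X k) (inferInstance : MeasurableSpace ell2)
        = MeasurableSpace.comap (fun ω => (X k ω, Y ω))
          (MeasurableSpace.comap Prod.fst inferInstance) := by
      rw [MeasurableSpace.comap_comp]; rfl
    calc mX k = MeasurableSpace.comap (fun ω => (X k ω, Y ω))
          (MeasurableSpace.comap Prod.fst inferInstance) := hco
      _ ≤ mXY k := MeasurableSpace.comap_mono measurable_fst.comap_le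
  -- the indicator of `{δ = k}`
  set I : Fin M → Ω → ℝ := fun k ω => if δ ω = k then (1:ℝ) else 0 with hIdef
  have hImeas : ∀ k, Measurable (I k) := fun k =>
    Measurable.ite (hδ (measurableSet_singleton k)) measurable_const measurable_const
  have hIb : ∀ k ω, ‖I k ω‖ ≤ 1 := by
    intro k ω; simp only [hIdef]; split <;> simp
  have hIint : ∀ k, Integrable (I k) P :=
    fun k => (integrable_const (1:ℝ)).mono' ((hImeas k).aestronglyMeasurable)
      (Filter.Eventually.of_forall (hIb k))
  have hYb : ∀ ω, ‖Y ω‖ ≤ 1 := by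
    intro ω; rcases hY01 ω with h | h <;> simp [h]
  have h1Yb : ∀ ω, ‖1 - Y ω‖ ≤ 1 := by
    intro ω; rcases hY01 ω with h | h <;> simp [h]
  -- measurability of `Y` w.r.t. `mXY k`
  have hYmXY : ∀ k, StronglyMeasurable[mXY k] Y := by
    intro k
    have hpm : Measurable[mXY k] (fun ω => (X k ω, Y ω)) :=
      measurable_iff_comap_le.mpr le_rfl
    exact (measurable_snd.comp hpm).stronglyMeasurable
  -- properties of `r`
  have hrint : ∀ k, Integrable (r k) P := by intro k; rw [hr k]; exact integrable_condExp
  have hYr : ∀ k, Integrable (fun ω => Y ω * r k ω) P := fun k =>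
    (hrint k).bdd_mul hYmeas.aestronglyMeasurable (ae_of_all _ hYb)
  have h1Yr : ∀ k, Integrable (fun ω => (1 - Y ω) * r k ω) P := fun k =>
    (hrint k).bdd_mul ((measurable_const.sub hYmeas).aestronglyMeasurable) (ae_of_all _ h1Yb)
  -- measurability of `φ`
  have hφmX : ∀ k, StronglyMeasurable[mX k] (φ k) := by
    intro k; rw [hφ k]; exact stronglyMeasurable_condExp
  have hφmeas : ∀ k, Measurable (φ k) := fun k => ((hφmX k).mono (hmX k)).measurable
  -- the indicators of `{0 < φ k}`
  set h1 : Fin M → Ω → ℝ := fun k ω => if 0 < φ k ω then (1:ℝ) else 0 with h1def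
  set h2 : Fin M → Ω → ℝ := fun k ω => if 0 < φ k ω then (0:ℝ) else 1 with h2def
  have h1mX : ∀ k, StronglyMeasurable[mX k] (h1 k) := by
    intro k
    exact ((Measurable.ite (measurableSet_lt measurable_const (hφmX k).measurable)
      measurable_const measurable_const) : Measurable[mX k] (h1 k)).stronglyMeasurable
  have h2mX : ∀ k, StronglyMeasurable[mX k] (h2 k) := by
    intro k
    exact ((Measurable.ite (measurableSet_lt measurable_const (hφmX k).measurable)
      measurable_const measurable_const) : Measurable[mX k] (h2 k)).stronglyMeasurable
  have h1b : ∀ k ω, ‖h1 k ω‖ ≤ 1 := by intro k ω; simp only [h1def]; split <;> simp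
  have h2b : ∀ k ω, ‖h2 k ω‖ ≤ 1 := by intro k ω; simp only [h2def]; split <;> simp
  have h1meas : ∀ k, Measurable (h1 k) := fun k => ((h1mX k).mono (hmX k)).measurable
  have h2meas : ∀ k, Measurable (h2 k) := fun k => ((h2mX k).mono (hmX k)).measurable
  -- key integral identities
  have key1 : ∀ k, ∫ ω, (h1 k ω * Y ω) * I k ω ∂P = ∫ ω, h1 k ω * A k ω ∂P := by
    intro k
    have hg : StronglyMeasurable[mXY k] (fun ω => h1 k ω * Y ω) :=
      ((h1mX k).mono (hle k)).mul (hYmXY k)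
    have hgb : ∀ ω, ‖h1 k ω * Y ω‖ ≤ 1 := by
      intro ω
      calc ‖h1 k ω * Y ω‖ = ‖h1 k ω‖ * ‖Y ω‖ := norm_mul _ _
        _ ≤ 1 * 1 := mul_le_mul (h1b k ω) (hYb ω) (norm_nonneg _) zero_le_one
        _ = 1 := one_mul 1
    have step1 := bayes_key_mul P (hmXY k) hg hgb (hIint k)
    rw [← hr k] at step1
    have step2 : ∫ ω, (h1 k ω * Y ω) * r k ω ∂P = ∫ ω, h1 k ω * (Y ω * r k ω) ∂P := by
      congr 1; funext ω; ring
    have step3 := bayes_key_mul P (hmX k) (h1mX k) (h1b k) (hYr k)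
    rw [← hA k] at step3
    rw [step1, step2, step3]
  have key2 : ∀ k, ∫ ω, (h2 k ω * (1 - Y ω)) * I k ω ∂P = ∫ ω, h2 k ω * B k ω ∂P := by
    intro k
    have hg : StronglyMeasurable[mXY k] (fun ω => h2 k ω * (1 - Y ω)) :=
      ((h2mX k).mono (hle k)).mul (stronglyMeasurable_const.sub (hYmXY k))
    have hgb : ∀ ω, ‖h2 k ω * (1 - Y ω)‖ ≤ 1 := by
      intro ω
      calc ‖h2 k ω * (1 - Y ω)‖ = ‖h2 k ω‖ * ‖1 - Y ω‖ := norm_mul _ _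
        _ ≤ 1 * 1 := mul_le_mul (h2b k ω) (h1Yb ω) (norm_nonneg _) zero_le_one
        _ = 1 := one_mul 1
    have step1 := bayes_key_mul P (hmXY k) hg hgb (hIint k)
    rw [← hr k] at step1
    have step2 : ∫ ω, (h2 k ω * (1 - Y ω)) * r k ω ∂P
        = ∫ ω, h2 k ω * ((1 - Y ω) * r k ω) ∂P := by
      congr 1; funext ω; ring
    have step3 := bayes_key_mul P (hmX k) (h2mX k) (h2b k) (h1Yr k)
    rw [← hB k] at step3
    rw [step1, step2, step3]
  -- `φ k = A k - B k` a.e.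
  have hφAB : ∀ k, φ k =ᵐ[P] fun ω => A k ω - B k ω := by
    intro k
    have hgm : StronglyMeasurable[mXY k] (fun ω => 2 * Y ω - 1) :=
      ((stronglyMeasurable_const.mul (hYmXY k)).sub stronglyMeasurable_const)
    have h2Yb : ∀ ω, ‖2 * Y ω - 1‖ ≤ 1 := by
      intro ω; rcases hY01 ω with h | h <;> rw [h] <;> norm_num
    have hprod : Integrable ((fun ω => 2 * Y ω - 1) * I k) P :=
      (hIint k).bdd_mul (((hgm.mono (hmXY k))).aestronglyMeasurable) (ae_of_all _ h2Yb)
    have pull : P[(fun ω => 2 * Y ω - 1) * I k | mXY k]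
        =ᵐ[P] (fun ω => 2 * Y ω - 1) * P[I k | mXY k] :=
      condExp_mul_of_stronglyMeasurable_left hgm hprod (hIint k)
    have tower : P[(fun ω => 2 * Y ω - 1) * I k | mX k]
        =ᵐ[P] P[P[(fun ω => 2 * Y ω - 1) * I k | mXY k] | mX k] :=
      (condExp_condExp_of_le (hle k) (hmXY k)).symm
    have step : P[P[(fun ω => 2 * Y ω - 1) * I k | mXY k] | mX k]
        =ᵐ[P] P[(fun ω => 2 * Y ω - 1) * r k | mX k] := by
      apply condExp_congr_ae
      rw [hr k]
      exact pull
    have hsplit : (fun ω => 2 * Y ω - 1) * r k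
        = (fun ω => Y ω * r k ω) - (fun ω => (1 - Y ω) * r k ω) := by
      funext ω; simp only [Pi.mul_apply, Pi.sub_apply]; ring
    have hsub : P[(fun ω => 2 * Y ω - 1) * r k | mX k]
        =ᵐ[P] fun ω => A k ω - B k ω := by
      rw [hsplit]
      refine (condExp_sub (hYr k) (h1Yr k) _).trans ?_
      rw [hA k, hB k]
      rfl
    have : φ k = P[(fun ω => 2 * Y ω - 1) * I k | mX k] := by
      rw [hφ k]; rfl
    rw [this]
    exact (tower.trans step).trans hsub
  -- per-k conclusion
  have hAint : ∀ k, Integrable (A k) P := by intro k; rw [hA k]; exact integrable_condExp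
  have hBint : ∀ k, Integrable (B k) P := by intro k; rw [hB k]; exact integrable_condExp
  have keyk : ∀ k, (∫ ω, (h1 k ω * Y ω) * I k ω ∂P) + (∫ ω, (h2 k ω * (1 - Y ω)) * I k ω ∂P)
      = ∫ ω, max (A k ω) (B k ω) ∂P := by
    intro k
    rw [key1 k, key2 k]
    have hi1 : Integrable (fun ω => h1 k ω * A k ω) P :=
      (hAint k).bdd_mul ((h1meas k).aestronglyMeasurable) (ae_of_all _ (h1b k))
    have hi2 : Integrable (fun ω => h2 k ω * B k ω) P :=
      (hBint k).bdd_mul ((h2meas k).aestronglyMeasurable) (ae_of_all _ (h2b k))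
    rw [← integral_add hi1 hi2]
    apply integral_congr_ae
    filter_upwards [hφAB k] with ω hω
    by_cases hpos : 0 < φ k ω
    · have hAB : B k ω < A k ω := by
        have : 0 < A k ω - B k ω := hω ▸ hpos
        linarith
      simp only [h1def, h2def, if_pos hpos]
      rw [max_eq_left hAB.le]; ring
    · have hAB : A k ω ≤ B k ω := by
        have : φ k ω ≤ 0 := not_lt.mp hpos
        have h2 : A k ω - B k ω ≤ 0 := hω ▸ this
        linarith
      simp only [h1def, h2def, if_neg hpos]
      rw [max_eq_right hAB]; ring
  -- measurability of the success event
  set S : Set Ω := {ω | (∑ k, I k ω * h1 k ω) = Y ω} with hSdef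
  have hG : Measurable (fun ω => ∑ k, I k ω * h1 k ω) :=
    Finset.measurable_sum _ fun k _ => (hImeas k).mul (h1meas k)
  have hS : MeasurableSet S := measurableSet_eq_fun hG hYmeas
  -- pointwise decomposition of the indicator of the success event
  have hsum : ∀ (c : Fin M → ℝ) ω, (∑ k, I k ω * c k) = c (δ ω) := by
    intro c ω
    rw [Finset.sum_eq_single (δ ω)]
    · simp [hIdef]
    · intro k _ hk
      simp [hIdef, Ne.symm hk]
    · intro h; exact absurd (Finset.mem_univ _) h
  have hpoint : ∀ ω, S.indicator (fun _ => (1:ℝ)) ω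
      = ∑ k, ((h1 k ω * Y ω) * I k ω + (h2 k ω * (1 - Y ω)) * I k ω) := by
    intro ω
    have hR : ∑ k, ((h1 k ω * Y ω) * I k ω + (h2 k ω * (1 - Y ω)) * I k ω)
        = h1 (δ ω) ω * Y ω + h2 (δ ω) ω * (1 - Y ω) := by
      have := hsum (fun k => h1 k ω * Y ω + h2 k ω * (1 - Y ω)) ω
      rw [← this]
      apply Finset.sum_congr rfl
      intro k _
      ring
    rw [hR]
    have hmem : ω ∈ S ↔ h1 (δ ω) ω = Y ω := by
      simp only [hSdef, Set.mem_setOf_eq, hsum (fun k => h1 k ω) ω]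
    rw [Set.indicator_apply]
    by_cases hpos : 0 < φ (δ ω) ω <;> rcases hY01 ω with hy | hy <;>
      simp [hmem, h1def, h2def, hpos, hy]
  have hFint : ∀ k, Integrable
      (fun ω => (h1 k ω * Y ω) * I k ω + (h2 k ω * (1 - Y ω)) * I k ω) P := by
    intro k
    refine Integrable.add ?_ ?_
    · exact (hIint k).bdd_mul (((h1meas k).mul hYmeas).aestronglyMeasurable)
        (ae_of_all _ fun ω => by
          calc ‖h1 k ω * Y ω‖ = ‖h1 k ω‖ * ‖Y ω‖ := norm_mul _ _
            _ ≤ 1 * 1 := mul_le_mul (h1b k ω) (hYb ω) (norm_nonneg _) zero_le_one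
            _ = 1 := one_mul 1)
    · exact (hIint k).bdd_mul (((h2meas k).mul (measurable_const.sub hYmeas)).aestronglyMeasurable)
        (ae_of_all _ fun ω => by
          calc ‖h2 k ω * (1 - Y ω)‖ = ‖h2 k ω‖ * ‖1 - Y ω‖ := norm_mul _ _
            _ ≤ 1 * 1 := mul_le_mul (h2b k ω) (h1Yb ω) (norm_nonneg _) zero_le_one
            _ = 1 := one_mul 1)
  calc (P S).toReal
      = ∫ ω, S.indicator (fun _ => (1:ℝ)) ω ∂P := (integral_indicator_one hS).symm
    _ = ∫ ω, ∑ k, ((h1 k ω * Y ω) * I k ω + (h2 k ω * (1 - Y ω)) * I k ω) ∂P :=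
        integral_congr_ae (Filter.Eventually.of_forall hpoint)
    _ = ∑ k, ∫ ω, ((h1 k ω * Y ω) * I k ω + (h2 k ω * (1 - Y ω)) * I k ω) ∂P :=
        integral_finset_sum _ fun k _ => hFint k
    _ = ∑ k, ∫ ω, max (A k ω) (B k ω) ∂P := by
        refine Finset.sum_congr rfl fun k _ => ?_
        rw [integral_add ?_ ?_]
        · exact keyk k
        · exact (hIint k).bdd_mul (((h1meas k).mul hYmeas).aestronglyMeasurable)
            (ae_of_all _ fun ω => by
              calc ‖h1 k ω * Y ω‖ = ‖h1 k ω‖ * ‖Y ω‖ := norm_mul _ _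
                _ ≤ 1 * 1 := mul_le_mul (h1b k ω) (hYb ω) (norm_nonneg _) zero_le_one
                _ = 1 := one_mul 1)
        · exact (hIint k).bdd_mul
            (((h2meas k).mul (measurable_const.sub hYmeas)).aestronglyMeasurable)
            (ae_of_all _ fun ω => by
              calc ‖h2 k ω * (1 - Y ω)‖ = ‖h2 k ω‖ * ‖1 - Y ω‖ := norm_mul _ _
                _ ≤ 1 * 1 := mul_le_mul (h2b k ω) (h1Yb ω) (norm_nonneg _) zero_le_one
                _ = 1 := one_mul 1)
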